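/- Any branchwise-real tree order containing at most countably many branching nodes admits a continuous grading. -/

import Mathlib

/-- A partial order is rooted if it has a minimum element. -/
def IsRooted (X : Type*) [PartialOrder X] : Prop := ∃ r : X, ∀ x, r ≤ x

/-- The set of predecessors of every element is linearly ordered. -/
def DownLinear (X : Type*) [PartialOrder X] : Prop :=
  ∀ x y z : X, y ≤ x → z ≤ x → y ≤ z ∨ z ≤ y

/-- A well-stratified tree: a rooted partial order in which the set of
predecessors of every element is well-ordered. -/
def IsWSTree (T : Type*) [PartialOrder T] : Prop :=
  IsRooted T ∧ DownLinear T ∧ ∀ x : T, (Set.Iio x).IsWF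

/-- A branchwise-real tree order: a rooted partial order with linearly
ordered predecessor sets, in which every branch (maximal chain) is
order-isomorphic to a real interval, and any two elements have a meet. -/
def IsBRTO (X : Type*) [PartialOrder X] : Prop :=
  IsRooted X ∧ DownLinear X ∧
  (∀ B : Set X, IsMaxChain (· ≤ ·) B →
      ∃ I : Set ℝ, I.OrdConnected ∧ Nonempty (B ≃o I)) ∧
  (∀ x y : X, ∃ m : X, IsGLB {x, y} m)

/-- A continuous grading: a strictly monotonic real-valued map restricting
to an order isomorphism `[x,y] → [ℓ x, ℓ y]` for all `x < y` (these intervals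
are chains, so a strictly monotonic bijection between them is an order
isomorphism). -/
def IsContinuousGrading {X : Type*} [PartialOrder X] (ℓ : X → ℝ) : Prop :=
  StrictMono ℓ ∧ ∀ x y : X, x < y →
    Set.BijOn ℓ (Set.Icc x y) (Set.Icc (ℓ x) (ℓ y))

/-- A node `x` is branching if there are two elements strictly above `x`
lying in different connected components of the set above `x`, i.e. having no
common lower bound strictly above `x`. -/
def IsBranching {X : Type*} [PartialOrder X] (x : X) : Prop :=
  ∃ y z : X, x < y ∧ x < z ∧ ¬ ∃ w : X, x < w ∧ w ≤ y ∧ w ≤ z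

namespace BRTOAux

open Set

structure Setup (X : Type*) [PartialOrder X] where
  r : X
  hr : ∀ x, r ≤ x
  hdl : DownLinear X
  hmax : ∀ B : Set X, IsMaxChain (· ≤ ·) B →
      ∃ I : Set ℝ, I.OrdConnected ∧ Nonempty (B ≃o I)
  mu : X → X → X
  hmu : ∀ x y, IsGLB {x, y} (mu x y)
  b : ℕ → X
  hb0 : b 0 = r
  hbr : ∀ x, IsBranching x → ∃ k, x = b k

variable {X : Type*} [PartialOrder X]

/- basic mu facts -/
lemma mu_le_left (S : Setup X) (x y : X) : S.mu x y ≤ x :=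
  (S.hmu x y).1 (Set.mem_insert _ _)

lemma mu_le_right (S : Setup X) (x y : X) : S.mu x y ≤ y :=
  (S.hmu x y).1 (Set.mem_insert_of_mem _ rfl)

lemma le_mu (S : Setup X) {x y z : X} (hx : z ≤ x) (hy : z ≤ y) : z ≤ S.mu x y := by
  refine (S.hmu x y).2 ?_
  rintro w (rfl | rfl) <;> assumption

lemma mu_eq_left (S : Setup X) {x y : X} (h : x ≤ y) : S.mu x y = x :=
  le_antisymm (mu_le_left S x y) (le_mu S le_rfl h)

lemma mu_self (S : Setup X) (x : X) : S.mu x x = x := mu_eq_left S le_rfl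

lemma meet_cases (S : Setup X) (y z : X) :
    S.mu y z = y ∨ S.mu y z = z ∨ IsBranching (S.mu y z) := by
  by_cases h1 : S.mu y z = y
  · exact Or.inl h1
  by_cases h2 : S.mu y z = z
  · exact Or.inr (Or.inl h2)
  refine Or.inr (Or.inr ⟨y, z, lt_of_le_of_ne (mu_le_left S y z) h1,
    lt_of_le_of_ne (mu_le_right S y z) h2, ?_⟩)
  rintro ⟨w, hw1, hw2, hw3⟩
  exact absurd (le_mu S hw2 hw3) (not_le_of_gt hw1)

/- max chains swallow intervals -/
lemma mem_maxChain (S : Setup X) {B : Set X} (hB : IsMaxChain (· ≤ ·) B)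
    {z : X} (hz : ∀ w ∈ B, z ≤ w ∨ w ≤ z) : z ∈ B := by
  have hch : IsChain (· ≤ ·) (insert z B) := by
    intro u hu v hv huv
    rcases hu with rfl | hu
    · rcases hv with rfl | hv
      · exact absurd rfl huv
      · exact hz v hv
    · rcases hv with rfl | hv
      · exact (hz u hu).symm
      · exact hB.1 hu hv huv
  have := hB.2 hch (Set.subset_insert _ _)
  rw [this]; exact Set.mem_insert _ _

lemma icc_subset_maxChain (S : Setup X) {B : Set X} (hB : IsMaxChain (· ≤ ·) B)
    {a b : X} (ha : a ∈ B) (hb : b ∈ B) {z : X} (hz : z ∈ Set.Icc a b) : z ∈ B := by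
  refine mem_maxChain S hB fun w hw => ?_
  rcases eq_or_ne w b with rfl | hwb
  · exact Or.inl hz.2
  rcases hB.1 hw hb hwb with h1 | h1
  · exact (S.hdl b z w hz.2 h1).imp id id
  · exact Or.inl (hz.2.trans h1)

/- THE parametrization lemma -/
lemma param (S : Setup X) (T : Set X) (hchain : IsChain (· ≤ ·) T)
    (hconv : ∀ a ∈ T, ∀ b ∈ T, Set.Icc a b ⊆ T)
    (c : X) (hc : c ∈ T) (hmin : ∀ z ∈ T, c ≤ z) :
    ∃ f : X → ℝ, f c = 0 ∧ (∀ z ∈ T, f z ∈ Set.Ico (0:ℝ) 1) ∧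
      StrictMonoOn f T ∧
      ∀ a ∈ T, ∀ b ∈ T, a ≤ b → Set.BijOn f (Set.Icc a b) (Set.Icc (f a) (f b)) := by
  classical
  obtain ⟨B, hB, hTB⟩ := hchain.exists_maxChain
  obtain ⟨I, hI, ⟨e⟩⟩ := S.hmax B hB
  set q : ℝ ≃o Set.Ioo (-1:ℝ) 1 := orderIsoIooNegOneOne ℝ with hq
  set g : ℝ → ℝ := fun t => (q t : ℝ) with hg
  have hgmono : StrictMono g := fun a b h => by
    exact_mod_cast q.strictMono h
  have hgmem : ∀ t, g t ∈ Set.Ioo (-1:ℝ) 1 := fun t => (q t).2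
  set eh : X → ℝ := fun z => if h : z ∈ B then (e ⟨z, h⟩ : ℝ) else 0 with heh
  have hehI : ∀ z, (hz : z ∈ B) → eh z ∈ I := by
    intro z hz; simp only [heh, dif_pos hz]; exact (e ⟨z, hz⟩).2
  have hemono : ∀ {z w : X}, (hz : z ∈ B) → (hw : w ∈ B) → (z ≤ w ↔ eh z ≤ eh w) := by
    intro z w hz hw
    simp only [heh, dif_pos hz, dif_pos hw]
    constructor
    · intro h; exact Subtype.coe_le_coe.2 (e.le_iff_le.2 (Subtype.mk_le_mk.2 h))
    · intro h; exact Subtype.mk_le_mk.1 (e.le_iff_le.1 (Subtype.coe_le_coe.1 h))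
  have hlt : ∀ {z w : X}, (hz : z ∈ B) → (hw : w ∈ B) → z < w → eh z < eh w := by
    intro z w hz hw h
    rcases lt_or_eq_of_le ((hemono hz hw).1 h.le) with h1 | h1
    · exact h1
    · exact absurd ((hemono hw hz).2 h1.ge) (not_le_of_gt h)
  have hsurj : ∀ {a b : X}, (ha : a ∈ B) → (hb : b ∈ B) → a ≤ b → ∀ u : ℝ, eh a ≤ u → u ≤ eh b →
      ∃ z, z ∈ Set.Icc a b ∧ eh z = u := by
    intro a b ha hb hab u h1 h2
    have huI : u ∈ I := by
      have h1' : eh a ∈ I := hehI a ha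
      have h2' : eh b ∈ I := hehI b hb
      exact hI.out h1' h2' ⟨h1, h2⟩
    set zz := e.symm ⟨u, huI⟩ with hzz
    refine ⟨(zz : X), ⟨?_, ?_⟩, ?_⟩
    · have : e ⟨a, ha⟩ ≤ ⟨u, huI⟩ := by
        rw [← Subtype.coe_le_coe]
        simpa only [heh, dif_pos ha] using h1
      have := e.le_iff_le.1 (by rw [OrderIso.apply_symm_apply]; exact this : e ⟨a, ha⟩ ≤ e zz)
      exact this
    · have : (⟨u, huI⟩ : I) ≤ e ⟨b, hb⟩ := by
        rw [← Subtype.coe_le_coe]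
        simpa only [heh, dif_pos hb] using h2
      have := e.le_iff_le.1 (by rw [OrderIso.apply_symm_apply]; exact this : e zz ≤ e ⟨b, hb⟩)
      exact this
    · have hzB : (zz : X) ∈ B := zz.2
      simp only [heh, dif_pos hzB]
      have : (⟨(zz : X), hzB⟩ : B) = zz := Subtype.coe_eta _ _
      rw [this, hzz, OrderIso.apply_symm_apply]
  have hcB : c ∈ B := hTB hc
  set n0 : ℝ := g (eh c) with hn0
  have hn0lt : n0 < 1 := (hgmem _).2
  have hden : (0:ℝ) < 1 - n0 := by linarith
  refine ⟨fun z => (g (eh z) - n0) / (1 - n0), by simp [hn0], ?_, ?_, ?_⟩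
  · intro z hz
    have hzB : z ∈ B := hTB hz
    have h1 : n0 ≤ g (eh z) := hgmono.monotone ((hemono hcB hzB).1 (hmin z hz))
    have h2 : g (eh z) < 1 := (hgmem _).2
    constructor
    · apply div_nonneg _ hden.le; linarith
    · rw [div_lt_one hden]; linarith
  · intro z hz w hw hzw
    have h := hlt (hTB hz) (hTB hw) hzw
    have h2 := hgmono h
    exact (div_lt_div_iff_of_pos_right hden).2 (by linarith)
  · -- BijOn
    intro a ha b hb hab
    have haB : a ∈ B := hTB ha
    have hbB : b ∈ B := hTB hb
    have hmonoT : StrictMonoOn (fun z => (g (eh z) - n0) / (1 - n0)) T := by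
      intro z hz w hw hzw
      have h2 := hgmono (hlt (hTB hz) (hTB hw) hzw)
      exact (div_lt_div_iff_of_pos_right hden).2 (by linarith)
    have hsubT : Set.Icc a b ⊆ T := hconv a ha b hb
    have hmonoI : MonotoneOn (fun z => (g (eh z) - n0) / (1 - n0)) (Set.Icc a b) :=
      (hmonoT.monotoneOn).mono hsubT
    refine ⟨?_, ?_, ?_⟩
    · intro z hz
      exact ⟨hmonoI ⟨le_rfl, hab⟩ hz hz.1, hmonoI hz ⟨hab, le_rfl⟩ hz.2⟩
    · intro z hz w hw hfzw
      rcases eq_or_ne z w with rfl | hne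
      · rfl
      rcases (S.hdl b z w hz.2 hw.2) with h1 | h1
      · rcases lt_or_eq_of_le h1 with h2 | h2
        · exact absurd hfzw (ne_of_lt (hmonoT (hsubT hz) (hsubT hw) h2))
        · exact h2
      · rcases lt_or_eq_of_le h1 with h2 | h2
        · exact absurd hfzw.symm (ne_of_lt (hmonoT (hsubT hw) (hsubT hz) h2))
        · exact h2.symm
    · intro v hv
      set v' : ℝ := v * (1 - n0) + n0 with hv'
      have hva : (g (eh a) - n0) / (1 - n0) ≤ v := hv.1
      have hvb : v ≤ (g (eh b) - n0) / (1 - n0) := hv.2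
      have h1 : g (eh a) ≤ v' := by
        rw [div_le_iff₀ hden] at hva; rw [hv']; linarith
      have h2 : v' ≤ g (eh b) := by
        rw [le_div_iff₀ hden] at hvb; rw [hv']; linarith
      have hv'mem : v' ∈ Set.Ioo (-1:ℝ) 1 := ⟨lt_of_lt_of_le (hgmem _).1 h1,
        lt_of_le_of_lt h2 (hgmem _).2⟩
      set u : ℝ := (q.symm ⟨v', hv'mem⟩ : ℝ) with hu
      have hgu : g u = v' := by
        simp only [hg, hu, OrderIso.apply_symm_apply]
      have hau : eh a ≤ u := by
        by_contra hcon
        push_neg at hcon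
        exact absurd (hgu ▸ hgmono hcon) (not_lt_of_ge h1)
      have hub : u ≤ eh b := by
        by_contra hcon
        push_neg at hcon
        exact absurd (hgu ▸ hgmono hcon) (not_lt_of_ge h2)
      obtain ⟨z, hzI, hze⟩ := hsurj haB hbB hab u hau hub
      refine ⟨z, hzI, ?_⟩
      simp only [hze, hgu]
      field_simp
      rw [hv']
      ring


/- least upper bounds below a fixed point -/
lemma exists_lub (S : Setup X) (x : X) (D : Set X) (hD : D.Nonempty)
    (hDx : ∀ a ∈ D, a ≤ x) :
    ∃ s, s ≤ x ∧ (∀ a ∈ D, a ≤ s) ∧ ∀ z, z ≤ x → (∀ a ∈ D, a ≤ z) → s ≤ z := by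
  classical
  have hchain : IsChain (· ≤ ·) (Set.Icc S.r x) := by
    intro u hu v hv _
    exact S.hdl x u v hu.2 hv.2
  have hconv : ∀ a ∈ Set.Icc S.r x, ∀ b ∈ Set.Icc S.r x, Set.Icc a b ⊆ Set.Icc S.r x := by
    intro a ha b hb z hz
    exact ⟨ha.1.trans hz.1, hz.2.trans hb.2⟩
  obtain ⟨f, hf0, hfr, hfmono, hfbij⟩ := param S (Set.Icc S.r x) hchain hconv S.r
    ⟨le_rfl, S.hr x⟩ (fun z hz => hz.1)
  have hrx : S.r ∈ Set.Icc S.r x := ⟨le_rfl, S.hr x⟩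
  have hxx : x ∈ Set.Icc S.r x := ⟨S.hr x, le_rfl⟩
  have hDsub : D ⊆ Set.Icc S.r x := fun a ha => ⟨S.hr a, hDx a ha⟩
  set E := f '' D with hE
  have hEne : E.Nonempty := hD.image f
  have hEbdd : BddAbove E := by
    refine ⟨f x, ?_⟩
    rintro v ⟨a, ha, rfl⟩
    exact hfmono.monotoneOn (hDsub ha) hxx (hDx a ha)
  set s0 := sSup E with hs0
  obtain ⟨a0, ha0⟩ := hD
  have h1 : f S.r ≤ s0 := le_trans
    (hfmono.monotoneOn hrx (hDsub ha0) (S.hr a0)) (le_csSup hEbdd ⟨a0, ha0, rfl⟩)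
  have h2 : s0 ≤ f x := csSup_le hEne fun v hv => by
    obtain ⟨a, ha, rfl⟩ := hv
    exact hfmono.monotoneOn (hDsub ha) hxx (hDx a ha)
  obtain ⟨s, hsI, hsv⟩ := (hfbij S.r hrx x hxx (S.hr x)).2.2 ⟨h1, h2⟩
  refine ⟨s, hsI.2, ?_, ?_⟩
  · intro a ha
    rcases S.hdl x a s (hDx a ha) hsI.2 with h | h
    · exact h
    · rcases lt_or_eq_of_le h with h3 | h3
      · have hfa : f a ≤ s0 := le_csSup hEbdd ⟨a, ha, rfl⟩
        exact absurd (hsv ▸ hfmono hsI (hDsub ha) h3) (not_lt_of_ge hfa)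
      · exact h3.ge
  · intro z hzx hz
    have hzI : z ∈ Set.Icc S.r x := ⟨S.hr z, hzx⟩
    have hfz : s0 ≤ f z := csSup_le hEne fun v hv => by
      obtain ⟨a, ha, rfl⟩ := hv
      exact hfmono.monotoneOn (hDsub ha) hzI (hz a ha)
    rcases S.hdl x s z hsI.2 hzx with h | h
    · exact h
    · rcases lt_or_eq_of_le h with h3 | h3
      · exact absurd (hsv ▸ hfmono hzI hsI h3) (not_lt_of_ge hfz)
      · exact h3.ge


/-! ## The skeleton recursion -/

def A (S : Setup X) (n : ℕ) : Set X := {x | ∃ k < n, x ≤ S.b k}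

def Aw (S : Setup X) : Set X := {x | ∃ k, x ≤ S.b k}

lemma A_mono (S : Setup X) {m n : ℕ} (h : m ≤ n) : A S m ⊆ A S n :=
  fun _ ⟨k, hk, hx⟩ => ⟨k, lt_of_lt_of_le hk h, hx⟩

lemma A_down (S : Setup X) {n : ℕ} {a z : X} (ha : a ∈ A S n) (hz : z ≤ a) : z ∈ A S n := by
  obtain ⟨k, hk, h⟩ := ha; exact ⟨k, hk, hz.trans h⟩

lemma A_sub_Aw (S : Setup X) {n : ℕ} : A S n ⊆ Aw S := fun _ ⟨k, _, hx⟩ => ⟨k, hx⟩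

lemma Aw_down (S : Setup X) {a z : X} (ha : a ∈ Aw S) (hz : z ≤ a) : z ∈ Aw S := by
  obtain ⟨k, h⟩ := ha; exact ⟨k, hz.trans h⟩

lemma mem_A_of_Aw (S : Setup X) {x : X} (hx : x ∈ Aw S) : ∃ n, x ∈ A S n := by
  obtain ⟨k, h⟩ := hx; exact ⟨k + 1, k, Nat.lt_succ_self k, h⟩

lemma pair_mem_A (S : Setup X) {x y : X} (hx : x ∈ Aw S) (hy : y ∈ Aw S) :
    ∃ n, x ∈ A S n ∧ y ∈ A S n := by
  obtain ⟨m, hm⟩ := mem_A_of_Aw S hx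
  obtain ⟨n, hn⟩ := mem_A_of_Aw S hy
  exact ⟨max m n, A_mono S (le_max_left _ _) hm, A_mono S (le_max_right _ _) hn⟩

lemma r_mem_Aw (S : Setup X) : S.r ∈ Aw S := ⟨0, by rw [S.hb0]⟩

def Inv (S : Setup X) (n : ℕ) (f : X → ℝ) : Prop :=
  StrictMonoOn f (A S n) ∧
  (∀ a ∈ A S n, ∀ b ∈ A S n, a ≤ b → Set.BijOn f (Set.Icc a b) (Set.Icc (f a) (f b))) ∧
  (∀ a ∈ A S n, f a ∈ Set.Icc (0:ℝ) (1 - (1/2:ℝ)^n))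

lemma bijOn_of_surjOn (S : Setup X) {f : X → ℝ} {W : Set X} (hW : StrictMonoOn f W)
    {a b : X} (hab : a ≤ b) (hsub : Set.Icc a b ⊆ W)
    (hs : Set.SurjOn f (Set.Icc a b) (Set.Icc (f a) (f b))) :
    Set.BijOn f (Set.Icc a b) (Set.Icc (f a) (f b)) := by
  refine ⟨?_, ?_, hs⟩
  · intro z hz
    exact ⟨hW.monotoneOn (hsub ⟨le_rfl, hab⟩) (hsub hz) hz.1,
           hW.monotoneOn (hsub hz) (hsub ⟨hab, le_rfl⟩) hz.2⟩
  · intro z hz w hw hf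
    rcases eq_or_ne z w with rfl | hne
    · rfl
    rcases S.hdl b z w hz.2 hw.2 with h | h
    · rcases lt_or_eq_of_le h with h2 | h2
      · exact absurd hf (ne_of_lt (hW (hsub hz) (hsub hw) h2))
      · exact h2
    · rcases lt_or_eq_of_le h with h2 | h2
      · exact absurd hf.symm (ne_of_lt (hW (hsub hw) (hsub hz) h2))
      · exact h2.symm

lemma exists_max_meet (S : Setup X) (n : ℕ) (hn : 0 < n) :
    ∃ m, m ∈ A S n ∧ m ≤ S.b n ∧ ∀ z ∈ A S n, z ≤ S.b n → z ≤ m := by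
  classical
  set M : Set X := (fun k => S.mu (S.b k) (S.b n)) '' (Set.Iio n) with hM
  have hMfin : M.Finite := (Set.finite_Iio n).image _
  have hMne : M.Nonempty := ⟨_, ⟨0, hn, rfl⟩⟩
  obtain ⟨m, hmM, hmmax⟩ : ∃ m ∈ M, ∀ v ∈ M, id m ≤ id v → id m = id v := by
    obtain ⟨m, hm⟩ := hMfin.exists_maximal hMne
    exact ⟨m, hm.1, fun v hv h => le_antisymm h (hm.2 hv h)⟩
  have hMle : ∀ v ∈ M, v ≤ S.b n := by
    rintro v ⟨k, _, rfl⟩; exact mu_le_right S _ _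
  have hmax' : ∀ v ∈ M, v ≤ m := by
    intro v hv
    rcases S.hdl (S.b n) v m (hMle v hv) (hMle m hmM) with h | h
    · exact h
    · exact (hmmax v hv h).ge
  obtain ⟨k0, hk0, hmk⟩ := hmM
  refine ⟨m, ⟨k0, hk0, by rw [← hmk]; exact mu_le_left S _ _⟩, hMle m ⟨k0, hk0, hmk⟩, ?_⟩
  rintro z ⟨k, hk, hzk⟩ hzb
  exact le_trans (le_mu S hzk hzb) (hmax' _ ⟨k, hk, rfl⟩)

lemma A_succ_mem (S : Setup X) (n : ℕ) (z : X) :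
    z ∈ A S (n+1) ↔ z ∈ A S n ∨ z ≤ S.b n := by
  constructor
  · rintro ⟨k, hk, hz⟩
    rcases Nat.lt_succ_iff_lt_or_eq.1 hk with h | rfl
    · exact Or.inl ⟨k, h, hz⟩
    · exact Or.inr hz
  · rintro (⟨k, hk, hz⟩ | hz)
    · exact ⟨k, hk.trans (Nat.lt_succ_self n), hz⟩
    · exact ⟨n, Nat.lt_succ_self n, hz⟩

lemma ext_step (S : Setup X) (n : ℕ) (f : X → ℝ) (hf : Inv S n f) :
    ∃ g, Inv S (n+1) g ∧ ∀ x ∈ A S n, g x = f x := by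
  classical
  obtain ⟨hfm, hfb, hfr⟩ := hf
  rcases Nat.eq_zero_or_pos n with rfl | hn
  · -- base case : A S 1 = {r}
    have hA0 : A S 0 = ∅ := by
      ext z; simp only [A, Set.mem_setOf_eq, Set.mem_empty_iff_false, iff_false]
      rintro ⟨k, hk, -⟩; omega
    have hA1 : ∀ x ∈ A S 1, x = S.r := by
      rintro x ⟨k, hk, hx⟩
      have : k = 0 := by omega
      subst this
      rw [S.hb0] at hx
      exact le_antisymm hx (S.hr x)
    refine ⟨fun _ => 0, ⟨?_, ?_, ?_⟩, ?_⟩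
    · intro x hx y hy hxy
      rw [hA1 x hx, hA1 y hy] at hxy
      exact absurd hxy (lt_irrefl _)
    · intro a ha b hb hab
      have ha' := hA1 a ha
      have hb' := hA1 b hb
      subst ha'; rw [hb'] at *
      refine ⟨?_, ?_, ?_⟩
      · intro z _; exact ⟨le_rfl, le_rfl⟩
      · intro z hz w hw _
        rw [le_antisymm hz.2 hz.1, le_antisymm hw.2 hw.1]
      · intro v hv
        exact ⟨S.r, ⟨le_rfl, le_rfl⟩, (le_antisymm hv.2 hv.1).symm⟩
    · intro a _
      constructor
      · exact le_rfl
      · norm_num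
    · intro x hx
      rw [hA0] at hx
      exact absurd hx (Set.notMem_empty x)
  · -- inductive step
    obtain ⟨m, hmA, hmb, hmmax⟩ := exists_max_meet S n hn
    have hchainT : IsChain (· ≤ ·) (Set.Icc m (S.b n)) :=
      fun u hu v hv _ => S.hdl (S.b n) u v hu.2 hv.2
    have hconvT : ∀ a ∈ Set.Icc m (S.b n), ∀ b ∈ Set.Icc m (S.b n),
        Set.Icc a b ⊆ Set.Icc m (S.b n) :=
      fun a ha b hb z hz => ⟨ha.1.trans hz.1, hz.2.trans hb.2⟩
    obtain ⟨φ, hφ0, hφr, hφm, hφb⟩ := param S (Set.Icc m (S.b n)) hchainT hconvT m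
      ⟨le_rfl, hmb⟩ (fun z hz => hz.1)
    set t := φ (S.b n) with ht
    set k : ℝ := (1/2:ℝ)^(n+1) with hkdef
    have hkpos : 0 < k := by positivity
    set g : X → ℝ :=
      fun z => if z ∈ A S n then f z else if z ≤ S.b n then f m + k * (φ z / t) else 0 with hg
    have hgA : ∀ z ∈ A S n, g z = f z := fun z hz => if_pos hz
    have hgN : ∀ z, z ∉ A S n → z ≤ S.b n → g z = f m + k * (φ z / t) := by
      intro z h1 h2; simp only [hg, if_neg h1, if_pos h2]
    have hnewlt : ∀ z, z ≤ S.b n → z ∉ A S n → m < z := by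
      intro z hz hzA
      rcases S.hdl (S.b n) z m hz hmb with h | h
      · exact absurd (A_down S hmA h) hzA
      · exact lt_of_le_of_ne h fun he => hzA (he ▸ hmA)
    have htpos : ∀ z, z ≤ S.b n → z ∉ A S n → 0 < t := by
      intro z hz hzA
      have h2 : m < S.b n := lt_of_lt_of_le (hnewlt z hz hzA) hz
      have := hφm ⟨le_rfl, hmb⟩ ⟨hmb, le_rfl⟩ h2
      rwa [hφ0] at this
    have hφpos : ∀ z, z ≤ S.b n → z ∉ A S n → 0 < φ z := by
      intro z hz hzA
      have := hφm ⟨le_rfl, hmb⟩ ⟨(hnewlt z hz hzA).le, hz⟩ (hnewlt z hz hzA)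
      rwa [hφ0] at this
    have htne : ∀ z, z ≤ S.b n → z ∉ A S n → (t:ℝ) ≠ 0 := fun z h1 h2 => (htpos z h1 h2).ne'
    have harith : ∀ (v : ℝ), t ≠ 0 → f m + k * ((v - f m) * t / k / t) = v := by
      intro v htn
      have hk0 : k ≠ 0 := hkpos.ne'
      field_simp
      ring
    have hmono1 : StrictMonoOn g (A S (n+1)) := by
      intro x hx y hy hxy
      by_cases hxA : x ∈ A S n
      · by_cases hyA : y ∈ A S n
        · rw [hgA x hxA, hgA y hyA]; exact hfm hxA hyA hxy
        · have hyb : y ≤ S.b n := ((A_succ_mem S n y).1 hy).resolve_left hyA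
          rw [hgA x hxA, hgN y hyA hyb]
          have hxm : x ≤ m := hmmax x hxA (hxy.le.trans hyb)
          have hfxm : f x ≤ f m := hfm.monotoneOn hxA hmA hxm
          have hpos : 0 < φ y / t := div_pos (hφpos y hyb hyA) (htpos y hyb hyA)
          nlinarith
      · have hxb : x ≤ S.b n := ((A_succ_mem S n x).1 hx).resolve_left hxA
        by_cases hyA : y ∈ A S n
        · exact absurd (A_down S hyA hxy.le) hxA
        · have hyb : y ≤ S.b n := ((A_succ_mem S n y).1 hy).resolve_left hyA
          rw [hgN x hxA hxb, hgN y hyA hyb]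
          have hφxy : φ x < φ y := hφm ⟨(hnewlt x hxb hxA).le, hxb⟩
            ⟨(hnewlt y hyb hyA).le, hyb⟩ hxy
          have htp := htpos x hxb hxA
          have := (div_lt_div_iff_of_pos_right htp).2 hφxy
          nlinarith
    have hsub1 : ∀ {a b : X}, b ∈ A S (n+1) → Set.Icc a b ⊆ A S (n+1) :=
      fun hb z hz => A_down S hb hz.2
    have hbij1 : ∀ a ∈ A S (n+1), ∀ b' ∈ A S (n+1), a ≤ b' →
        Set.BijOn g (Set.Icc a b') (Set.Icc (g a) (g b')) := by
      intro a ha b' hb' hab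
      refine bijOn_of_surjOn S hmono1 hab (hsub1 hb') ?_
      by_cases haA : a ∈ A S n
      · by_cases hbA : b' ∈ A S n
        · intro v hv
          rw [hgA a haA, hgA b' hbA] at hv
          obtain ⟨z, hzI, hzv⟩ := (hfb a haA b' hbA hab).2.2 hv
          exact ⟨z, hzI, by rw [hgA z (A_down S hbA hzI.2)]; exact hzv⟩
        · have hbb : b' ≤ S.b n := ((A_succ_mem S n b').1 hb').resolve_left hbA
          have ham : a ≤ m := hmmax a haA (hab.trans hbb)
          have hmb' : m < b' := hnewlt b' hbb hbA
          have htp := htpos b' hbb hbA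
          intro v hv
          rw [hgA a haA, hgN b' hbA hbb] at hv
          by_cases hvm : v ≤ f m
          · obtain ⟨z, hzI, hzv⟩ := (hfb a haA m hmA ham).2.2 ⟨hv.1, hvm⟩
            exact ⟨z, ⟨hzI.1, hzI.2.trans hmb'.le⟩,
              by rw [hgA z (A_down S hmA hzI.2)]; exact hzv⟩
          · push_neg at hvm
            set w := (v - f m) * t / k with hw
            have hwpos : 0 < w := div_pos (mul_pos (by linarith) htp) hkpos
            have hwb : w ≤ φ b' := by
              rw [hw, div_le_iff₀ hkpos]
              have h2 : v - f m ≤ k * (φ b' / t) := by linarith [hv.2]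
              have h4 := mul_le_mul_of_nonneg_right h2 htp.le
              have h3 : k * (φ b' / t) * t = φ b' * k := by
                field_simp
              linarith [h3 ▸ h4]
            obtain ⟨z, hzI, hzv⟩ := (hφb m ⟨le_rfl, hmb⟩ b' ⟨hmb'.le, hbb⟩ hmb'.le).2.2
              ⟨le_of_eq_of_le hφ0 hwpos.le, hwb⟩
            by_cases hzA : z ∈ A S n
            · exfalso
              have hzm : z ≤ m := hmmax z hzA (hzI.2.trans hbb)
              have : φ z ≤ φ m := hφm.monotoneOn ⟨hzI.1, hzI.2.trans hbb⟩ ⟨le_rfl, hmb⟩ hzm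
              rw [hφ0, hzv] at this
              linarith
            · refine ⟨z, ⟨ham.trans hzI.1, hzI.2⟩, ?_⟩
              rw [hgN z hzA (hzI.2.trans hbb), hzv, hw]
              exact harith v (htne b' hbb hbA)
      · have hab' : a ≤ S.b n := ((A_succ_mem S n a).1 ha).resolve_left haA
        have hbA : b' ∉ A S n := fun h => haA (A_down S h hab)
        have hbb : b' ≤ S.b n := ((A_succ_mem S n b').1 hb').resolve_left hbA
        have hma := hnewlt a hab' haA
        have htp := htpos a hab' haA
        intro v hv
        rw [hgN a haA hab', hgN b' hbA hbb] at hv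
        set w := (v - f m) * t / k with hw
        have htn : t ≠ 0 := htne a hab' haA
        have hw1 : φ a ≤ w := by
          rw [hw, le_div_iff₀ hkpos]
          have h1 : k * (φ a / t) ≤ v - f m := by linarith [hv.1]
          have h4 := mul_le_mul_of_nonneg_right h1 htp.le
          have h3 : k * (φ a / t) * t = φ a * k := by
            field_simp
          linarith [h3 ▸ h4]
        have hw2 : w ≤ φ b' := by
          rw [hw, div_le_iff₀ hkpos]
          have h2 : v - f m ≤ k * (φ b' / t) := by linarith [hv.2]
          have h4 := mul_le_mul_of_nonneg_right h2 htp.le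
          have h3 : k * (φ b' / t) * t = φ b' * k := by
            field_simp
          linarith [h3 ▸ h4]
        obtain ⟨z, hzI, hzv⟩ := (hφb a ⟨hma.le, hab'⟩ b' ⟨hma.le.trans hab, hbb⟩ hab).2.2
          ⟨hw1, hw2⟩
        have hzA : z ∉ A S n := fun h => haA (A_down S h hzI.1)
        refine ⟨z, hzI, ?_⟩
        rw [hgN z hzA (hzI.2.trans hbb), hzv, hw]
        exact harith v (htne a hab' haA)
    have hbound : ∀ a ∈ A S (n+1), g a ∈ Set.Icc (0:ℝ) (1 - (1/2:ℝ)^(n+1)) := by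
      intro a ha
      have hps : (1/2:ℝ)^(n+1) = (1/2:ℝ)^n * (1/2) := pow_succ _ _
      by_cases haA : a ∈ A S n
      · rw [hgA a haA]
        have h1 := hfr a haA
        exact ⟨h1.1, by linarith [h1.2]⟩
      · have hab : a ≤ S.b n := ((A_succ_mem S n a).1 ha).resolve_left haA
        rw [hgN a haA hab]
        have htp := htpos a hab haA
        have h1 : 0 < φ a := hφpos a hab haA
        have h2 : φ a ≤ t := hφm.monotoneOn ⟨(hnewlt a hab haA).le, hab⟩ ⟨hmb, le_rfl⟩ hab
        have h3 : φ a / t ≤ 1 := div_le_one_of_le₀ h2 htp.le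
        have h4 : 0 ≤ f m := (hfr m hmA).1
        have h5 : f m ≤ 1 - (1/2:ℝ)^n := (hfr m hmA).2
        have h6 : 0 ≤ φ a / t := le_of_lt (div_pos h1 htp)
        constructor
        · nlinarith
        · nlinarith
    exact ⟨g, ⟨hmono1, hbij1, hbound⟩, hgA⟩

lemma F0_inv (S : Setup X) : Inv S 0 (fun _ => (0:ℝ)) := by
  have hA0 : A S 0 = ∅ := by
    ext z; simp only [A, Set.mem_setOf_eq, Set.mem_empty_iff_false, iff_false]
    rintro ⟨k, hk, -⟩; omega
  refine ⟨?_, ?_, ?_⟩ <;> intro a ha <;> rw [hA0] at ha <;> exact absurd ha (Set.notMem_empty a)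

noncomputable def F (S : Setup X) : (n : ℕ) → {f : X → ℝ // Inv S n f}
  | 0 => ⟨fun _ => 0, F0_inv S⟩
  | n+1 => ⟨(ext_step S n (F S n).1 (F S n).2).choose,
      (ext_step S n (F S n).1 (F S n).2).choose_spec.1⟩

lemma F_succ_agree (S : Setup X) (n : ℕ) : ∀ x ∈ A S n, (F S (n+1)).1 x = (F S n).1 x :=
  (ext_step S n (F S n).1 (F S n).2).choose_spec.2

lemma F_agree (S : Setup X) : ∀ {m n : ℕ}, m ≤ n → ∀ {x : X}, x ∈ A S m →
    (F S n).1 x = (F S m).1 x := by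
  intro m n
  induction n with
  | zero => intro h x _; rw [Nat.le_zero.1 h]
  | succ n ih =>
    intro h x hx
    rcases Nat.lt_succ_iff_lt_or_eq.1 (Nat.lt_succ_of_le h) with h2 | rfl
    · have h3 : m ≤ n := Nat.lt_succ_iff.1 h2
      rw [F_succ_agree S n x (A_mono S h3 hx), ih h3 hx]
    · rfl

open Classical in
noncomputable def lw (S : Setup X) (x : X) : ℝ :=
  if h : x ∈ Aw S then (F S (Classical.choose h + 1)).1 x else 0

lemma lw_eq (S : Setup X) {n : ℕ} {x : X} (hx : x ∈ A S n) : lw S x = (F S n).1 x := by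
  have hxw : x ∈ Aw S := A_sub_Aw S hx
  classical
  rw [lw]
  rw [dif_pos hxw]
  have hk : x ≤ S.b (Classical.choose hxw) := Classical.choose_spec hxw
  have h1 : x ∈ A S (Classical.choose hxw + 1) :=
    ⟨Classical.choose hxw, Nat.lt_succ_self _, hk⟩
  rw [← F_agree S (le_max_left (Classical.choose hxw + 1) n) h1,
    F_agree S (le_max_right (Classical.choose hxw + 1) n) hx]

lemma lw_mono (S : Setup X) : StrictMonoOn (lw S) (Aw S) := by
  intro x hx y hy hxy
  obtain ⟨n, hxn, hyn⟩ := pair_mem_A S hx hy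
  rw [lw_eq S hxn, lw_eq S hyn]
  exact (F S n).2.1 hxn hyn hxy

lemma lw_bij (S : Setup X) {a b : X} (ha : a ∈ Aw S) (hb : b ∈ Aw S) (hab : a ≤ b) :
    Set.BijOn (lw S) (Set.Icc a b) (Set.Icc (lw S a) (lw S b)) := by
  obtain ⟨n, han, hbn⟩ := pair_mem_A S ha hb
  have h1 := ((F S n).2.2.1 a han b hbn hab).congr
    (fun z hz => (lw_eq S (A_down S hbn hz.2)).symm)
  rw [lw_eq S han, lw_eq S hbn]
  exact h1

lemma lw_bdd (S : Setup X) {a : X} (ha : a ∈ Aw S) : lw S a ∈ Set.Icc (0:ℝ) 1 := by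
  obtain ⟨n, han⟩ := mem_A_of_Aw S ha
  rw [lw_eq S han]
  have h := (F S n).2.2.2 a han
  have : (0:ℝ) ≤ (1/2:ℝ)^n := by positivity
  exact ⟨h.1, by linarith [h.2]⟩


/-! ## Tails above the skeleton -/

noncomputable def cpt (S : Setup X) (x : X) : X :=
  (exists_lub S x {a | a ∈ Aw S ∧ a ≤ x} ⟨S.r, r_mem_Aw S, S.hr x⟩ (fun _ ha => ha.2)).choose

lemma cpt_le (S : Setup X) (x : X) : cpt S x ≤ x :=
  (exists_lub S x {a | a ∈ Aw S ∧ a ≤ x} ⟨S.r, r_mem_Aw S, S.hr x⟩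
    (fun _ ha => ha.2)).choose_spec.1

lemma le_cpt (S : Setup X) {x a : X} (ha : a ∈ Aw S) (hax : a ≤ x) : a ≤ cpt S x :=
  (exists_lub S x {a | a ∈ Aw S ∧ a ≤ x} ⟨S.r, r_mem_Aw S, S.hr x⟩
    (fun _ ha => ha.2)).choose_spec.2.1 a ⟨ha, hax⟩

lemma cpt_min (S : Setup X) {x z : X} (hz : z ≤ x)
    (h : ∀ a, a ∈ Aw S → a ≤ x → a ≤ z) : cpt S x ≤ z :=
  (exists_lub S x {a | a ∈ Aw S ∧ a ≤ x} ⟨S.r, r_mem_Aw S, S.hr x⟩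
    (fun _ ha => ha.2)).choose_spec.2.2 z hz (fun a ha => h a ha.1 ha.2)

lemma mem_Aw_of_lt_cpt (S : Setup X) {x u : X} (hu : u ≤ x) (h : u < cpt S x) :
    u ∈ Aw S := by
  by_contra hcon
  refine absurd (cpt_min S hu fun a ha hax => ?_) (not_le_of_gt h)
  rcases S.hdl x a u hax hu with h1 | h1
  · exact h1
  · exact absurd (Aw_down S ha h1) hcon

lemma not_Aw_above_cpt (S : Setup X) {x z : X} (hz : z ≤ x) (h : cpt S x < z) :
    z ∉ Aw S := fun hzw => absurd (le_cpt S hzw hz) (not_le_of_gt h)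

lemma Dset_eq (S : Setup X) {x y : X} (hxy : x ≤ y) (hx : x ∉ Aw S) :
    {a | a ∈ Aw S ∧ a ≤ y} = {a | a ∈ Aw S ∧ a ≤ x} := by
  ext a
  constructor
  · rintro ⟨ha, hay⟩
    refine ⟨ha, ?_⟩
    rcases S.hdl y a x hay hxy with h | h
    · exact h
    · exact absurd (Aw_down S ha h) hx
  · rintro ⟨ha, hax⟩
    exact ⟨ha, hax.trans hxy⟩

lemma cpt_eq_of_le (S : Setup X) {x y : X} (hxy : x ≤ y) (hx : x ∉ Aw S) :
    cpt S y = cpt S x := by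
  have h1 : cpt S y ≤ x := by
    rcases S.hdl y (cpt S y) x (cpt_le S y) hxy with h | h
    · exact h
    · rcases lt_or_eq_of_le h with h2 | h2
      · exact absurd (mem_Aw_of_lt_cpt S hxy h2) hx
      · exact h2.ge
  apply le_antisymm
  · refine cpt_min S ((cpt_le S x).trans hxy) fun a ha hay => ?_
    have hax : a ≤ x := by
      rcases S.hdl y a x hay hxy with h | h
      · exact h
      · exact absurd (Aw_down S ha h) hx
    exact le_cpt S ha hax
  · exact cpt_min S h1 fun a ha hax => le_cpt S ha (hax.trans hxy)

lemma cpt_cpt (S : Setup X) {x : X} (h : cpt S x ∉ Aw S) :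
    cpt S (cpt S x) = cpt S x := (cpt_eq_of_le S (cpt_le S x) h).symm

lemma cpt_eq_of_mu (S : Setup X) {x z : X} (hx : x ∉ Aw S) (hz : z ∉ Aw S)
    (h : cpt S x < S.mu z x) :
    cpt S z = cpt S x ∧ {a | a ∈ Aw S ∧ a ≤ z} = {a | a ∈ Aw S ∧ a ≤ x} := by
  have hpz : S.mu z x ≤ z := mu_le_left S z x
  have hpx : S.mu z x ≤ x := mu_le_right S z x
  have hDzx : ∀ a, a ∈ Aw S → a ≤ z → a ≤ cpt S x := by
    intro a ha haz
    rcases S.hdl z a (S.mu z x) haz hpz with h1 | h1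
    · exact le_cpt S ha (h1.trans hpx)
    · rcases lt_or_eq_of_le h1 with h2 | h2
      · exfalso
        have hpq : S.mu z x ≤ S.mu a x := le_mu S h1 hpx
        have hqp : S.mu a x ≤ S.mu z x :=
          le_mu S ((mu_le_left S a x).trans haz) (mu_le_right S a x)
        have hqe : S.mu a x = S.mu z x := le_antisymm hqp hpq
        rcases meet_cases S a x with hc | hc | hc
        · rw [hc] at hqe
          exact h2.ne hqe.symm
        · exact hx (Aw_down S ha (hc ▸ mu_le_left S a x))
        · obtain ⟨kb, hkb⟩ := S.hbr _ hc
          have hqw : S.mu a x ∈ Aw S := ⟨kb, hkb.le⟩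
          exact absurd (hqe ▸ le_cpt S hqw (mu_le_right S a x)) (not_le_of_gt h)
      · exact le_cpt S ha (h2 ▸ hpx)
  have hD : {a | a ∈ Aw S ∧ a ≤ z} = {a | a ∈ Aw S ∧ a ≤ x} := by
    ext a
    constructor
    · rintro ⟨ha, haz⟩
      exact ⟨ha, (hDzx a ha haz).trans (cpt_le S x)⟩
    · rintro ⟨ha, hax⟩
      exact ⟨ha, (le_cpt S ha hax).trans (h.le.trans hpz)⟩
  have h1 : cpt S z ≤ cpt S x := cpt_min S (h.le.trans hpz) hDzx
  have h2 : cpt S x ≤ cpt S z := cpt_min S (h1.trans (cpt_le S x))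
    fun a ha hax => le_cpt S ha ((le_cpt S ha hax).trans (h.le.trans hpz))
  exact ⟨le_antisymm h1 h2, hD⟩

/-! ## L-values -/

noncomputable def Lv (S : Setup X) (x : X) : ℝ := sSup (lw S '' {a | a ∈ Aw S ∧ a ≤ x})

lemma Lv_bddAbove (S : Setup X) (x : X) : BddAbove (lw S '' {a | a ∈ Aw S ∧ a ≤ x}) := by
  refine ⟨1, ?_⟩
  rintro v ⟨a, ⟨ha, -⟩, rfl⟩
  exact (lw_bdd S ha).2

lemma Lv_ne (S : Setup X) (x : X) : (lw S '' {a | a ∈ Aw S ∧ a ≤ x}).Nonempty :=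
  ⟨_, ⟨S.r, ⟨r_mem_Aw S, S.hr x⟩, rfl⟩⟩

lemma le_Lv (S : Setup X) {x a : X} (ha : a ∈ Aw S) (hax : a ≤ x) : lw S a ≤ Lv S x :=
  le_csSup (Lv_bddAbove S x) ⟨a, ⟨ha, hax⟩, rfl⟩

lemma Lv_eq_of (S : Setup X) {x y : X} (hxy : x ≤ y) (hx : x ∉ Aw S) :
    Lv S y = Lv S x := by
  rw [Lv, Lv, Dset_eq S hxy hx]

lemma Lv_eq_lw (S : Setup X) {y : X} (hc : cpt S y ∈ Aw S) : Lv S y = lw S (cpt S y) := by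
  apply le_antisymm
  · refine csSup_le (Lv_ne S y) ?_
    rintro v ⟨a, ⟨ha, hay⟩, rfl⟩
    exact (lw_mono S).monotoneOn ha hc (le_cpt S ha hay)
  · exact le_Lv S hc (cpt_le S y)

/-! ## the tail sets -/

def Sset (S : Setup X) (x : X) : Set X :=
  insert (cpt S x) {z | z ∉ Aw S ∧ cpt S x < S.mu z x}

lemma Sset_min (S : Setup X) (x : X) : ∀ z ∈ Sset S x, cpt S x ≤ z := by
  rintro z (rfl | hz)
  · exact le_rfl
  · exact hz.2.le.trans (mu_le_left S z x)

lemma mem_Sset_self (S : Setup X) {x : X} (hx : x ∉ Aw S) (h : cpt S x < x) :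
    x ∈ Sset S x :=
  Set.mem_insert_of_mem _ ⟨hx, by rw [mu_self]; exact h⟩

lemma Sset_chain (S : Setup X) {x : X} (hx : x ∉ Aw S) : IsChain (· ≤ ·) (Sset S x) := by
  rintro u hu v hv hne
  rcases hu with rfl | hu
  · exact Or.inl (Sset_min S x v hv)
  rcases hv with rfl | hv
  · exact Or.inr (Sset_min S x u (Set.mem_insert_of_mem _ hu))
  have hcub : cpt S x < S.mu u v := by
    rcases S.hdl x (S.mu u x) (S.mu v x) (mu_le_right S u x) (mu_le_right S v x) with h | h
    · exact lt_of_lt_of_le hu.2 (le_mu S (mu_le_left S u x) (h.trans (mu_le_left S v x)))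
    · exact lt_of_lt_of_le hv.2 (le_mu S (h.trans (mu_le_left S u x)) (mu_le_left S v x))
  rcases meet_cases S u v with h | h | h
  · exact Or.inl (h ▸ mu_le_right S u v)
  · exact Or.inr (h ▸ mu_le_left S u v)
  · exfalso
    obtain ⟨kb, hkb⟩ := S.hbr _ h
    have hmw : S.mu u v ∈ Aw S := ⟨kb, hkb.le⟩
    have h2 : cpt S u = cpt S x := (cpt_eq_of_mu S hx hu.1 hu.2).1
    have := le_cpt S hmw (mu_le_left S u v)
    rw [h2] at this
    exact absurd this (not_le_of_gt hcub)

lemma Sset_convex (S : Setup X) {x : X} (hx : x ∉ Aw S) :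
    ∀ a ∈ Sset S x, ∀ b ∈ Sset S x, Set.Icc a b ⊆ Sset S x := by
  intro a ha b hb u hu
  rcases hb with rfl | hb
  · exact Set.mem_insert_iff.2
      (Or.inl (le_antisymm hu.2 ((Sset_min S x a ha).trans hu.1)))
  rcases lt_or_eq_of_le ((Sset_min S x a ha).trans hu.1) with hcu | hcu
  · refine Set.mem_insert_of_mem _ ⟨?_, ?_⟩
    · intro hAw
      have h2 : cpt S b = cpt S x := (cpt_eq_of_mu S hx hb.1 hb.2).1
      have := le_cpt S hAw hu.2
      rw [h2] at this
      exact absurd this (not_le_of_gt hcu)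
    · rcases S.hdl b u (S.mu b x) hu.2 (mu_le_left S b x) with h | h
      · have : S.mu u x = u := le_antisymm (mu_le_left S u x)
          (le_mu S le_rfl (h.trans (mu_le_right S b x)))
        rw [this]
        exact hcu
      · exact lt_of_lt_of_le hb.2 (le_mu S h (mu_le_right S b x))
  · exact Set.mem_insert_iff.2 (Or.inl hcu.symm)

lemma Sset_eq_of_le (S : Setup X) {z y : X} (hy : y ∉ Aw S) (hz : z ∉ Aw S)
    (hzy : z ≤ y) (h : cpt S y < z) : Sset S z = Sset S y := by
  have hc : cpt S z = cpt S y := (cpt_eq_of_le S hzy hz).symm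
  unfold Sset
  rw [hc]
  congr 1
  ext w
  simp only [Set.mem_setOf_eq]
  constructor
  · rintro ⟨hw, hmw⟩
    exact ⟨hw, lt_of_lt_of_le hmw
      (le_mu S (mu_le_left S w z) ((mu_le_right S w z).trans hzy))⟩
  · rintro ⟨hw, hmw⟩
    refine ⟨hw, ?_⟩
    rcases S.hdl y (S.mu w y) z (mu_le_right S w y) hzy with h1 | h1
    · exact lt_of_lt_of_le hmw (le_mu S (mu_le_left S w y) h1)
    · have hzw : z ≤ w := h1.trans (mu_le_left S w y)
      have h2 : S.mu w z = z := le_antisymm (mu_le_right S w z) (le_mu S hzw le_rfl)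
      rw [h2]
      exact h


/-! ## choice of parametrizations of tails -/

def Cond (T : Set X) : Prop :=
  IsChain (· ≤ ·) T ∧ (∀ a ∈ T, ∀ b ∈ T, Set.Icc a b ⊆ T) ∧ ∃ c ∈ T, ∀ z ∈ T, c ≤ z

def psiSpec (T : Set X) (f : X → ℝ) : Prop :=
  ∀ c ∈ T, (∀ z ∈ T, c ≤ z) →
    f c = 0 ∧ (∀ z ∈ T, f z ∈ Set.Ico (0:ℝ) 1) ∧ StrictMonoOn f T ∧
    ∀ a ∈ T, ∀ b ∈ T, a ≤ b → Set.BijOn f (Set.Icc a b) (Set.Icc (f a) (f b))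

lemma psi_ex (S : Setup X) (T : Set X) : ∃ f : X → ℝ, Cond T → psiSpec T f := by
  by_cases h : Cond T
  · obtain ⟨hch, hcv, c0, hc0, hmin0⟩ := h
    obtain ⟨f, h1, h2, h3, h4⟩ := param S T hch hcv c0 hc0 hmin0
    refine ⟨f, fun _ c hc hmin => ?_⟩
    have hcc : c = c0 := le_antisymm (hmin c0 hc0) (hmin0 c hc)
    exact ⟨hcc ▸ h1, h2, h3, h4⟩
  · exact ⟨fun _ => 0, fun hc => absurd hc h⟩

noncomputable def psi (S : Setup X) (T : Set X) : X → ℝ := (psi_ex S T).choose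

lemma psi_spec (S : Setup X) {T : Set X} (h : Cond T) : psiSpec T (psi S T) :=
  (psi_ex S T).choose_spec h

lemma cond_Sset (S : Setup X) {x : X} (hx : x ∉ Aw S) : Cond (Sset S x) :=
  ⟨Sset_chain S hx, Sset_convex S hx, cpt S x, Set.mem_insert _ _, Sset_min S x⟩

lemma psi_Sset (S : Setup X) {x : X} (hx : x ∉ Aw S) :
    psi S (Sset S x) (cpt S x) = 0 ∧
    (∀ z ∈ Sset S x, psi S (Sset S x) z ∈ Set.Ico (0:ℝ) 1) ∧
    StrictMonoOn (psi S (Sset S x)) (Sset S x) ∧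
    ∀ a ∈ Sset S x, ∀ b ∈ Sset S x, a ≤ b →
      Set.BijOn (psi S (Sset S x)) (Set.Icc a b)
        (Set.Icc (psi S (Sset S x) a) (psi S (Sset S x) b)) :=
  psi_spec S (cond_Sset S hx) (cpt S x) (Set.mem_insert _ _) (Sset_min S x)

/-! ## the grading -/

open Classical in
noncomputable def ell (S : Setup X) (x : X) : ℝ :=
  if x ∈ Aw S then lw S x else Lv S x + psi S (Sset S x) x

lemma ell_Aw (S : Setup X) {x : X} (h : x ∈ Aw S) : ell S x = lw S x := by
  rw [ell, if_pos h]

lemma ell_not (S : Setup X) {x : X} (h : x ∉ Aw S) :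
    ell S x = Lv S x + psi S (Sset S x) x := by
  rw [ell, if_neg h]

lemma ell_cpt_val (S : Setup X) {y : X} (hy : y ∉ Aw S) : ell S (cpt S y) = Lv S y := by
  by_cases hc : cpt S y ∈ Aw S
  · rw [ell_Aw S hc, ← Lv_eq_lw S hc]
  · rw [ell_not S hc, Lv_eq_of S (cpt_le S y) hc]
    have h2 := (psi_Sset S hc).1
    rw [cpt_cpt S hc] at h2
    rw [h2, add_zero]

lemma ell_tail (S : Setup X) {y z : X} (hy : y ∉ Aw S) (hz : z ∉ Aw S) (hzy : z ≤ y)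
    (h : cpt S y < z) : ell S z = Lv S y + psi S (Sset S y) z := by
  rw [ell_not S hz, Lv_eq_of S hzy hz, Sset_eq_of_le S hy hz hzy h]

lemma ell_mono (S : Setup X) : StrictMono (ell S) := by
  intro x y hxy
  by_cases hy : y ∈ Aw S
  · have hx : x ∈ Aw S := Aw_down S hy hxy.le
    rw [ell_Aw S hx, ell_Aw S hy]
    exact lw_mono S hx hy hxy
  · by_cases hx : x ∈ Aw S
    · rw [ell_Aw S hx, ell_not S hy]
      have hL : lw S x ≤ Lv S y := le_Lv S hx hxy.le
      rcases lt_or_eq_of_le (cpt_le S y) with hcy | hcy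
      · have hp := psi_Sset S hy
        have hyS : y ∈ Sset S y := mem_Sset_self S hy hcy
        have hpos : 0 < psi S (Sset S y) y := by
          have h2 := hp.2.2.1 (Set.mem_insert _ _) hyS hcy
          rwa [hp.1] at h2
        linarith
      · have hp := psi_Sset S hy
        have hpz : psi S (Sset S y) y = 0 := by
          have := hp.1
          rwa [hcy] at this
        have hstep : ∃ a, a ∈ Aw S ∧ a ≤ y ∧ x < a := by
          by_contra hcon
          push_neg at hcon
          have hub : ∀ a, a ∈ Aw S → a ≤ y → a ≤ x := by
            intro a ha hay
            rcases S.hdl y a x hay hxy.le with h | h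
            · exact h
            · rcases lt_or_eq_of_le h with h2 | h2
              · exact absurd h2 (hcon a ha hay)
              · exact h2.ge
          have hle := cpt_min S hxy.le hub
          rw [hcy] at hle
          exact absurd hle (not_le_of_gt hxy)
        obtain ⟨a, ha, hay, hxa⟩ := hstep
        have h1 := lw_mono S hx ha hxa
        have h2 := le_Lv S ha hay
        linarith
    · rw [ell_not S hx, ell_not S hy]
      have hcc : cpt S y = cpt S x := cpt_eq_of_le S hxy.le hx
      have hLL : Lv S y = Lv S x := Lv_eq_of S hxy.le hx
      rcases lt_or_eq_of_le (cpt_le S x) with hcx | hcx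
      · have hSS : Sset S x = Sset S y :=
          Sset_eq_of_le S hy hx hxy.le (by rw [hcc]; exact hcx)
        have hp := psi_Sset S hy
        have hxS : x ∈ Sset S y := by rw [← hSS]; exact mem_Sset_self S hx hcx
        have hyS : y ∈ Sset S y :=
          mem_Sset_self S hy (by rw [hcc]; exact lt_of_lt_of_le hcx hxy.le)
        have hlt := hp.2.2.1 hxS hyS hxy
        rw [hLL, hSS]
        linarith
      · have hx0 : psi S (Sset S x) x = 0 := by
          have := (psi_Sset S hx).1
          rwa [hcx] at this
        have hyS : y ∈ Sset S y :=
          mem_Sset_self S hy (by rw [hcc, hcx]; exact hxy)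
        have hp := psi_Sset S hy
        have hpos : 0 < psi S (Sset S y) y := by
          have h2 := hp.2.2.1 (Set.mem_insert _ _) hyS
            (show cpt S y < y by rw [hcc, hcx]; exact hxy)
          rwa [hp.1] at h2
        rw [hx0, hLL]
        linarith

lemma surj_upper (S : Setup X) {y : X} (hy : y ∉ Aw S) :
    Set.SurjOn (ell S) (Set.Icc (cpt S y) y) (Set.Icc (Lv S y) (ell S y)) := by
  intro v hv
  have hp := psi_Sset S hy
  rcases lt_or_eq_of_le (cpt_le S y) with hcy | hcy
  · have hyS : y ∈ Sset S y := mem_Sset_self S hy hcy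
    have hcS : cpt S y ∈ Sset S y := Set.mem_insert _ _
    have heyv : ell S y = Lv S y + psi S (Sset S y) y := ell_not S hy
    have hb := hp.2.2.2 (cpt S y) hcS y hyS (cpt_le S y)
    have hv' : v - Lv S y ∈
        Set.Icc (psi S (Sset S y) (cpt S y)) (psi S (Sset S y) y) := by
      rw [hp.1]
      exact ⟨by linarith [hv.1], by linarith [hv.2, heyv.symm.le]⟩
    obtain ⟨z, hzI, hzv⟩ := hb.2.2 hv'
    refine ⟨z, hzI, ?_⟩
    rcases lt_or_eq_of_le hzI.1 with hcz | hcz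
    · have hzA : z ∉ Aw S := not_Aw_above_cpt S hzI.2 hcz
      rw [ell_tail S hy hzA hzI.2 hcz, hzv]
      ring
    · rw [← hcz, ell_cpt_val S hy]
      rw [← hcz] at hzv
      rw [hp.1] at hzv
      linarith
  · have h0 : psi S (Sset S y) y = 0 := by
      have := hp.1
      rwa [hcy] at this
    have hey : ell S y = Lv S y := by rw [ell_not S hy, h0, add_zero]
    have hvv : v = ell S y := le_antisymm (hv.2) (by rw [hey]; exact hv.1)
    exact ⟨y, ⟨cpt_le S y, le_rfl⟩, hvv.symm⟩

lemma surj_lower (S : Setup X) {x y : X} (hx : x ∈ Aw S) (hy : y ∉ Aw S) (hxy : x ≤ y) :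
    Set.SurjOn (ell S) (Set.Icc x (cpt S y)) (Set.Icc (ell S x) (Lv S y)) := by
  have hxc : x ≤ cpt S y := le_cpt S hx hxy
  by_cases hc : cpt S y ∈ Aw S
  · intro v hv
    rw [ell_Aw S hx] at hv
    rw [Lv_eq_lw S hc] at hv
    obtain ⟨z, hzI, hzv⟩ := (lw_bij S hx hc hxc).2.2 hv
    exact ⟨z, hzI, by rw [ell_Aw S (Aw_down S hc hzI.2)]; exact hzv⟩
  · intro v hv
    rw [ell_Aw S hx] at hv
    rcases lt_or_eq_of_le hv.2 with hvL | hvL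
    · have hne : (lw S '' {a | a ∈ Aw S ∧ a ≤ y}).Nonempty := Lv_ne S y
      obtain ⟨w, hwmem, hvw⟩ := exists_lt_of_lt_csSup hne hvL
      obtain ⟨a, ⟨haw, hay⟩, rfl⟩ := hwmem
      have hxa : x ≤ a := by
        rcases S.hdl y a x hay hxy with h | h
        · exfalso
          have := (lw_mono S).monotoneOn haw hx h
          linarith [hv.1]
        · exact h
      have hac : a ≤ cpt S y := le_cpt S haw hay
      obtain ⟨z, hzI, hzv⟩ := (lw_bij S hx haw hxa).2.2 ⟨hv.1, hvw.le⟩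
      exact ⟨z, ⟨hzI.1, hzI.2.trans hac⟩,
        by rw [ell_Aw S (Aw_down S haw hzI.2)]; exact hzv⟩
    · exact ⟨cpt S y, ⟨hxc, le_rfl⟩, (ell_cpt_val S hy).trans hvL.symm⟩

lemma ell_surjOn (S : Setup X) {x y : X} (hxy : x < y) :
    Set.SurjOn (ell S) (Set.Icc x y) (Set.Icc (ell S x) (ell S y)) := by
  by_cases hy : y ∈ Aw S
  · have hx : x ∈ Aw S := Aw_down S hy hxy.le
    intro v hv
    rw [ell_Aw S hx, ell_Aw S hy] at hv
    obtain ⟨z, hzI, hzv⟩ := (lw_bij S hx hy hxy.le).2.2 hv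
    exact ⟨z, hzI, by rw [ell_Aw S (Aw_down S hy hzI.2)]; exact hzv⟩
  · by_cases hx : x ∈ Aw S
    · intro v hv
      have hxc : x ≤ cpt S y := le_cpt S hx hxy.le
      by_cases hvL : v ≤ Lv S y
      · obtain ⟨z, hzI, hzv⟩ := surj_lower S hx hy hxy.le ⟨hv.1, hvL⟩
        exact ⟨z, ⟨hzI.1, hzI.2.trans (cpt_le S y)⟩, hzv⟩
      · push_neg at hvL
        obtain ⟨z, hzI, hzv⟩ := surj_upper S hy ⟨hvL.le, hv.2⟩
        exact ⟨z, ⟨hxc.trans hzI.1, hzI.2⟩, hzv⟩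
    · have hcc : cpt S y = cpt S x := cpt_eq_of_le S hxy.le hx
      have hLL : Lv S y = Lv S x := Lv_eq_of S hxy.le hx
      rcases lt_or_eq_of_le (cpt_le S x) with hcx | hcx
      · -- cpt x < x : pure tail segment
        have hSS : Sset S x = Sset S y :=
          Sset_eq_of_le S hy hx hxy.le (by rw [hcc]; exact hcx)
        intro v hv
        have hp := psi_Sset S hy
        have hxS : x ∈ Sset S y := by rw [← hSS]; exact mem_Sset_self S hx hcx
        have hyS : y ∈ Sset S y :=
          mem_Sset_self S hy (by rw [hcc]; exact lt_of_lt_of_le hcx hxy.le)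
        have hex : ell S x = Lv S y + psi S (Sset S y) x := by
          rw [ell_not S hx, hLL, hSS]
        have hey : ell S y = Lv S y + psi S (Sset S y) y := ell_not S hy
        have hb := hp.2.2.2 x hxS y hyS hxy.le
        have hv' : v - Lv S y ∈
            Set.Icc (psi S (Sset S y) x) (psi S (Sset S y) y) :=
          ⟨by linarith [hv.1, hex.symm.le], by linarith [hv.2, hey.symm.le]⟩
        obtain ⟨z, hzI, hzv⟩ := hb.2.2 hv'
        refine ⟨z, hzI, ?_⟩
        have hcz : cpt S y < z := by
          rw [hcc]
          exact lt_of_lt_of_le hcx hzI.1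
        have hzA : z ∉ Aw S := not_Aw_above_cpt S hzI.2 hcz
        rw [ell_tail S hy hzA hzI.2 hcz, hzv]
        ring
      · -- cpt x = x
        intro v hv
        have h0 : ell S x = Lv S y := by
          have h1 := ell_cpt_val S hx
          rw [hcx] at h1
          rw [h1, hLL]
        obtain ⟨z, hzI, hzv⟩ := surj_upper S hy ⟨by rw [← h0]; exact hv.1, hv.2⟩
        have hcyx : cpt S y = x := hcc.trans hcx
        exact ⟨z, ⟨hcyx ▸ hzI.1, hzI.2⟩, hzv⟩

lemma setup_ex (Y : Type*) [PartialOrder Y] (hX : IsBRTO Y)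
    (hc : {x : Y | IsBranching x}.Countable) : Nonempty (Setup Y) := by
  obtain ⟨⟨r, hr⟩, hdl, hmax, hglb⟩ := hX
  choose mu hmu using hglb
  have hCc : (insert r {x : Y | IsBranching x}).Countable := hc.insert r
  have hCne : (insert r {x : Y | IsBranching x}).Nonempty := ⟨r, Set.mem_insert _ _⟩
  obtain ⟨f, hf⟩ := hCc.exists_eq_range hCne
  refine ⟨⟨r, hr, hdl, hmax, mu, hmu, fun n => if n = 0 then r else f (n - 1), by simp, ?_⟩⟩
  intro x hx
  have hxm : x ∈ insert r {x : Y | IsBranching x} := Set.mem_insert_of_mem _ hx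
  rw [hf] at hxm
  obtain ⟨k, hk⟩ := hxm
  refine ⟨k + 1, ?_⟩
  simp only [Nat.add_sub_cancel, Nat.succ_ne_zero, if_false]
  exact hk.symm

end BRTOAux

/-- Any branchwise-real tree order with at most countably many branching
nodes admits a continuous grading. -/
theorem brto_countably_many_branching_continuously_gradable (X : Type*)
    [PartialOrder X] (hX : IsBRTO X)
    (hc : {x : X | IsBranching x}.Countable) :
    ∃ ℓ : X → ℝ, IsContinuousGrading ℓ := by
  obtain ⟨S⟩ := BRTOAux.setup_ex X hX hc
  refine ⟨BRTOAux.ell S, BRTOAux.ell_mono S, fun x y hxy => ?_⟩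
  exact BRTOAux.bijOn_of_surjOn S ((BRTOAux.ell_mono S).strictMonoOn Set.univ) hxy.le
    (Set.subset_univ _) (BRTOAux.ell_surjOn S hxy)
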